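/- Let ζ : ℝ^d → ℝ^q be continuously differentiable and write g(x) = ∇ζ(x) ∈ ℝ^{d×q} for the transpose of its Jacobian. Let x, y ∈ ℝ^d, w ∈ ℝ^d and λ ∈ ℝ^q be such that y = x + w + g(x) λ, and suppose the matrix G_{y−x}(x) is invertible. Then the Lagrange multiplier λ is uniquely determined and given explicitly by λ = G_{y−x}(x)^{-1} ( ζ(y) − ζ(x) − (∫₀¹ g(x + τ(y − x)) dτ)^T w ). -/

import Mathlib

open Matrix intervalIntegral
open scoped Matrix.Norms.L2Operator

lemma myToEuclideanLin_mul {a b c : ℕ} (M : Matrix (Fin a) (Fin b) ℝ)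
    (N : Matrix (Fin b) (Fin c) ℝ) (u : EuclideanSpace ℝ (Fin c)) :
    Matrix.toEuclideanLin (M * N) u = Matrix.toEuclideanLin M (Matrix.toEuclideanLin N u) := by
  simp [Matrix.toEuclideanLin_apply, Matrix.mulVec_mulVec]

lemma myFderivEq {d q : ℕ}
    (ζ : EuclideanSpace ℝ (Fin d) → EuclideanSpace ℝ (Fin q))
    (g : EuclideanSpace ℝ (Fin d) → Matrix (Fin d) (Fin q) ℝ)
    (hg : ∀ x i j, g x i j = fderiv ℝ ζ x (EuclideanSpace.single i 1) j)
    (p : EuclideanSpace ℝ (Fin d)) (u : EuclideanSpace ℝ (Fin d)) :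
    fderiv ℝ ζ p u = Matrix.toEuclideanLin (g p)ᵀ u := by
  have h : (fderiv ℝ ζ p : EuclideanSpace ℝ (Fin d) →ₗ[ℝ] EuclideanSpace ℝ (Fin q))
      = Matrix.toEuclideanLin (g p)ᵀ := by
    apply Module.Basis.ext (EuclideanSpace.basisFun (Fin d) ℝ).toBasis
    intro i
    ext j
    simp only [OrthonormalBasis.coe_toBasis, EuclideanSpace.basisFun_apply,
      ContinuousLinearMap.coe_coe, Matrix.toEuclideanLin_apply,
      Matrix.mulVec, dotProduct, Matrix.transpose_apply, ← hg]
    simp [Pi.single_apply, mul_ite]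
  exact congrFun (congrArg DFunLike.coe h) u


/-- Let `ζ : ℝ^d → ℝ^q` be `C¹` with `g(x) = ∇ζ(x)` the transpose of its
Jacobian (`g(x)_{ij} = ∂ζ_j/∂x_i`). Let `x, y, w ∈ ℝ^d` and `λ ∈ ℝ^q` with
`y = x + w + g(x) λ`, and suppose `G_{y−x}(x) = (∫₀¹ g(x + τ(y−x)) dτ)ᵀ g(x)` is
invertible. Then `λ` is uniquely determined and
`λ = G_{y−x}(x)⁻¹ (ζ(y) − ζ(x) − (∫₀¹ g(x + τ(y−x)) dτ)ᵀ w)`. -/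
theorem lagrange_multiplier_explicit (d q : ℕ)
    (ζ : EuclideanSpace ℝ (Fin d) → EuclideanSpace ℝ (Fin q))
    (hζ : ContDiff ℝ 1 ζ)
    (g : EuclideanSpace ℝ (Fin d) → Matrix (Fin d) (Fin q) ℝ)
    (hg : ∀ x i j, g x i j = fderiv ℝ ζ x (EuclideanSpace.single i 1) j)
    (x y w : EuclideanSpace ℝ (Fin d)) (lam : EuclideanSpace ℝ (Fin q))
    (hy : y = x + w + Matrix.toEuclideanLin (g x) lam)
    (hinv : IsUnit ((∫ τ in (0:ℝ)..1, g (x + τ • (y - x)))ᵀ * g x)) :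
    lam = Matrix.toEuclideanLin (((∫ τ in (0:ℝ)..1, g (x + τ • (y - x)))ᵀ * g x)⁻¹)
      (ζ y - ζ x
        - Matrix.toEuclideanLin (∫ τ in (0:ℝ)..1, g (x + τ • (y - x)))ᵀ w) := by
  set v : EuclideanSpace ℝ (Fin d) := y - x with hvdef
  set A : Matrix (Fin d) (Fin q) ℝ := ∫ τ in (0:ℝ)..1, g (x + τ • v) with hA
  -- continuity of g
  have hfc : Continuous fun p => fderiv ℝ ζ p := (contDiff_one_iff_fderiv.mp hζ).2
  have hgc : Continuous g := by
    apply continuous_matrix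
    intro i j
    have : (fun p => g p i j)
        = fun p => EuclideanSpace.proj j ((ContinuousLinearMap.apply ℝ _
            (EuclideanSpace.single i (1:ℝ))) (fderiv ℝ ζ p)) := by
      funext p; simp [hg]
    rw [this]
    exact (EuclideanSpace.proj j).continuous.comp
      ((ContinuousLinearMap.apply ℝ _ _).continuous.comp hfc)
  have hcurve : Continuous fun τ : ℝ => x + τ • v := by continuity
  have hgint : IntervalIntegrable (fun τ => g (x + τ • v)) MeasureTheory.volume 0 1 :=
    (hgc.comp hcurve).intervalIntegrable 0 1
  -- FTC
  have hdiff := hζ.differentiable one_ne_zero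
  have hderiv : ∀ τ : ℝ, HasDerivAt (fun t : ℝ => ζ (x + t • v))
      (fderiv ℝ ζ (x + τ • v) v) τ := by
    intro τ
    have h1 : HasDerivAt (fun t : ℝ => x + t • v) v τ := by
      simpa using (((hasDerivAt_id τ).smul_const v).const_add x)
    exact ((hdiff (x + τ • v)).hasFDerivAt.comp_hasDerivAt τ h1)
  have hintg : IntervalIntegrable (fun τ => fderiv ℝ ζ (x + τ • v) v)
      MeasureTheory.volume 0 1 := by
    exact (((ContinuousLinearMap.apply ℝ _ v).continuous.comp hfc).comp hcurve).intervalIntegrable 0 1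
  have hftc : ζ y - ζ x = ∫ τ in (0:ℝ)..1, fderiv ℝ ζ (x + τ • v) v := by
    have := intervalIntegral.integral_eq_sub_of_hasDerivAt
      (f := fun t : ℝ => ζ (x + t • v)) (f' := fun τ => fderiv ℝ ζ (x + τ • v) v)
      (fun τ _ => hderiv τ) hintg
    simp only [one_smul, zero_smul, add_zero] at this
    rw [this, show x + v = y by simp [hvdef]]
  -- commute the integral with the linear map M ↦ toEuclideanLin Mᵀ v
  have hcomm : ∀ u : EuclideanSpace ℝ (Fin d),
      (∫ τ in (0:ℝ)..1, Matrix.toEuclideanLin (g (x + τ • v))ᵀ u)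
        = Matrix.toEuclideanLin Aᵀ u := by
    intro u
    let L : Matrix (Fin d) (Fin q) ℝ →L[ℝ] EuclideanSpace ℝ (Fin q) :=
      LinearMap.toContinuousLinearMap
        { toFun := fun M => Matrix.toEuclideanLin Mᵀ u
          map_add' := by intro M N; simp [Matrix.transpose_add]
          map_smul' := by intro c M; simp [Matrix.transpose_smul] }
    have := L.intervalIntegral_comp_comm hgint
    simpa [L, hA] using this
  have key : ζ y - ζ x = Matrix.toEuclideanLin Aᵀ v := by
    rw [hftc, ← hcomm v]
    congr 1
    funext τ
    exact myFderivEq ζ g hg _ v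
  have hvw : v = w + Matrix.toEuclideanLin (g x) lam := by
    rw [hvdef, hy]; abel
  have key2 : ζ y - ζ x - Matrix.toEuclideanLin Aᵀ w
      = Matrix.toEuclideanLin (Aᵀ * g x) lam := by
    rw [key, hvw, map_add, myToEuclideanLin_mul]
    abel
  rw [key2, ← myToEuclideanLin_mul, Matrix.nonsing_inv_mul _ ((Matrix.isUnit_iff_isUnit_det _).mp hinv)]
  simp [Matrix.toEuclideanLin_apply]
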